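/- The OPT-1 mechanism for the Happiness objective is strategy-proof: for every agent i, every true preference t_i ∈ {−1,0,1}, every vector t_{−i} of the other agents' declared preferences, and every misreport t_i′ ∈ {−1,0,1}, the utility of agent i (with his true preference) at the facility location output by the mechanism on the truthful profile (t_i, t_{−i}) is greater than or equal to his utility at the location output on the misreported profile (t_i′, t_{−i}). -/

import Mathlib

private lemma inf'_split {α : Type*} [DecidableEq α] {A : Finset α} {i : α} (hiA : i ∈ A)
    (hB : (A.erase i).Nonempty) (f : α → ℝ) (hA : A.Nonempty) :
    A.inf' hA f = min (f i) ((A.erase i).inf' hB f) := by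
  rw [show min (f i) ((A.erase i).inf' hB f) = f i ⊓ (A.erase i).inf' hB f from rfl, ← Finset.inf'_insert hB f]
  exact (Finset.inf'_congr _ (Finset.insert_erase hiA) (fun _ _ => rfl)).symm

/-- The OPT-1 mechanism for the Happiness objective is strategy-proof. -/
theorem opt1_happiness_strategyproof
    (d n : ℕ) (x : Fin n → EuclideanSpace ℝ (Fin d))
    (S : Set (EuclideanSpace ℝ (Fin d))) (hS : S.Nonempty)
    (g : Fin n → ℤ → ℝ → ℝ)
    (hgm : ∀ i : Fin n, StrictMonoOn (g i (-1)) (Set.Ici 0))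
    (hg0 : ∀ i : Fin n, ∀ a ∈ Set.Ici (0:ℝ), ∀ b ∈ Set.Ici (0:ℝ), g i 0 a = g i 0 b)
    (hga : ∀ i : Fin n, StrictAntiOn (g i 1) (Set.Ici 0))
    -- the maximum achievable utility uᵢ*(t) = sup_{y ∈ S} uᵢ(t,y), finite and positive
    (ustar : Fin n → ℤ → ℝ)
    (hstar : ∀ (i : Fin n) (t : ℤ), t = -1 ∨ t = 0 ∨ t = 1 →
      IsLUB ((fun y => g i t ‖x i - y‖) '' S) (ustar i t) ∧ 0 < ustar i t)
    -- a linear order ≼ on S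
    (le : EuclideanSpace ℝ (Fin d) → EuclideanSpace ℝ (Fin d) → Prop)
    (hrefl : ∀ a ∈ S, le a a)
    (htrans : ∀ a ∈ S, ∀ b ∈ S, ∀ c ∈ S, le a b → le b c → le a c)
    (hanti : ∀ a ∈ S, ∀ b ∈ S, le a b → le b a → a = b)
    (htotal : ∀ a ∈ S, ∀ b ∈ S, le a b ∨ le b a)
    -- the mechanism: on each declared profile it outputs the ≼-least maximizer of the
    -- minimum happiness ratio of the agents with nonzero declared preference
    (M : (Fin n → ℤ) → EuclideanSpace ℝ (Fin d))
    (hM : ∀ t : Fin n → ℤ, (∀ i, t i = -1 ∨ t i = 0 ∨ t i = 1) →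
      ∀ hne : (Finset.univ.filter (fun i : Fin n => t i ≠ 0)).Nonempty,
        M t ∈ S ∧
        (∀ z ∈ S,
          (Finset.univ.filter (fun i : Fin n => t i ≠ 0)).inf' hne
              (fun i => g i (t i) ‖x i - z‖ / ustar i (t i)) ≤
          (Finset.univ.filter (fun i : Fin n => t i ≠ 0)).inf' hne
              (fun i => g i (t i) ‖x i - M t‖ / ustar i (t i))) ∧
        (∀ y ∈ S,
          (∀ z ∈ S,
            (Finset.univ.filter (fun i : Fin n => t i ≠ 0)).inf' hne
                (fun i => g i (t i) ‖x i - z‖ / ustar i (t i)) ≤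
            (Finset.univ.filter (fun i : Fin n => t i ≠ 0)).inf' hne
                (fun i => g i (t i) ‖x i - y‖ / ustar i (t i))) → le (M t) y))
    (hM0 : ∀ t : Fin n → ℤ, (∀ i, t i = 0) → M t ∈ S ∧ ∀ y ∈ S, le (M t) y) :
    -- strategy-proofness
    ∀ (i : Fin n) (t : Fin n → ℤ), (∀ j, t j = -1 ∨ t j = 0 ∨ t j = 1) →
      ∀ t' : ℤ, (t' = -1 ∨ t' = 0 ∨ t' = 1) →
        g i (t i) ‖x i - M (Function.update t i t')‖ ≤ g i (t i) ‖x i - M t‖ := by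
  intro i t ht t' ht'
  by_cases h0 : t i = 0
  · rw [h0]
    exact le_of_eq (hg0 i _ (norm_nonneg _) _ (norm_nonneg _))
  by_cases hsame : t' = t i
  · rw [hsame, Function.update_eq_self]
  by_contra hcon
  push_neg at hcon
  set t2 := Function.update t i t' with ht2def
  set y := M t with hydef
  set y2 := M t2 with hy2def
  -- hcon : g i (t i) ‖x i - y‖ < g i (t i) ‖x i - y2‖
  have ht2all : ∀ j, t2 j = -1 ∨ t2 j = 0 ∨ t2 j = 1 := by
    intro j
    by_cases hj : j = i
    · subst hj; simpa [ht2def] using ht'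
    · simpa [ht2def, Function.update_of_ne hj] using ht j
  set A := Finset.univ.filter (fun j : Fin n => t j ≠ 0) with hAdef
  have hiA : i ∈ A := by simp [hAdef, h0]
  have hAne : A.Nonempty := ⟨i, hiA⟩
  obtain ⟨hyS, hymax, hyleast⟩ := hM t ht hAne
  have hipos : (0:ℝ) < ustar i (t i) := (hstar i (t i) (ht i)).2
  set F : EuclideanSpace ℝ (Fin d) → Fin n → ℝ :=
    fun z j => g j (t j) ‖x j - z‖ / ustar j (t j) with hFdef
  have hr : F y i < F y2 i := by
    show g i (t i) ‖x i - y‖ / ustar i (t i) < g i (t i) ‖x i - y2‖ / ustar i (t i)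
    exact div_lt_div_of_pos_right hcon hipos
  have hdist : ∀ z : EuclideanSpace ℝ (Fin d), ‖x i - z‖ ∈ Set.Ici (0:ℝ) :=
    fun z => norm_nonneg _
  have hsingF : ∀ (f : Fin n → ℝ), A = {i} → A.inf' hAne f = f i := by
    intro f hAi
    rw [Finset.inf'_congr hAne hAi (fun _ _ => rfl), Finset.inf'_singleton]
  by_cases hz' : t' = 0
  · -- misreport to 0 : filter for t2 is A.erase i
    have hA2 : Finset.univ.filter (fun j : Fin n => t2 j ≠ 0) = A.erase i := by
      ext j
      by_cases hj : j = i
      · subst hj; simp [ht2def, hz']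
      · simp [ht2def, Function.update_of_ne hj, hAdef, hj]
    by_cases hB : (A.erase i).Nonempty
    · have hA2ne : (Finset.univ.filter (fun j : Fin n => t2 j ≠ 0)).Nonempty := by
        rw [hA2]; exact hB
      obtain ⟨hy2S, hy2max, hy2least⟩ := hM t2 ht2all hA2ne
      have hGq : ∀ z : EuclideanSpace ℝ (Fin d),
          (Finset.univ.filter (fun j : Fin n => t2 j ≠ 0)).inf' hA2ne
            (fun j => g j (t2 j) ‖x j - z‖ / ustar j (t2 j)) = (A.erase i).inf' hB (F z) := by
        intro z
        refine Finset.inf'_congr hA2ne hA2 (fun j hj => ?_)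
        have hji : j ≠ i := by
          rw [hA2] at hj; exact (Finset.mem_erase.mp hj).1
        simp [ht2def, Function.update_of_ne hji, hFdef]
      have hsplit : ∀ z : EuclideanSpace ℝ (Fin d),
          A.inf' hAne (F z) = min (F z i) ((A.erase i).inf' hB (F z)) :=
        fun z => inf'_split hiA hB (F z) hAne
      have h1 : A.inf' hAne (F y2) ≤ A.inf' hAne (F y) := hymax y2 hy2S
      have h2 : (A.erase i).inf' hB (F y) ≤ (A.erase i).inf' hB (F y2) := by
        have h := hy2max y hyS
        rwa [hGq, hGq] at h
      rw [hsplit, hsplit] at h1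
      have hq2Fyi : (A.erase i).inf' hB (F y2) ≤ F y i :=
        (min_le_iff.mp (h1.trans (min_le_left _ _))).resolve_left (not_le.mpr hr)
      have hminy2 : min (F y2 i) ((A.erase i).inf' hB (F y2)) = (A.erase i).inf' hB (F y2) :=
        min_eq_right (le_of_lt (lt_of_le_of_lt hq2Fyi hr))
      have hq21 : (A.erase i).inf' hB (F y2) ≤ (A.erase i).inf' hB (F y) := by
        rw [hminy2] at h1
        exact h1.trans (min_le_right _ _)
      have hqq : (A.erase i).inf' hB (F y) = (A.erase i).inf' hB (F y2) :=
        le_antisymm h2 hq21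
      have hminy : min (F y i) ((A.erase i).inf' hB (F y)) = (A.erase i).inf' hB (F y) :=
        min_eq_right (by rw [hqq]; exact hq2Fyi)
      have hmeq : A.inf' hAne (F y) = A.inf' hAne (F y2) := by
        rw [hsplit, hsplit, hminy, hminy2, hqq]
      have hle12 : le y y2 := by
        refine hyleast y2 hy2S (fun z hz => ?_)
        exact (hymax z hz).trans (le_of_eq hmeq)
      have hle21 : le y2 y := by
        refine hy2least y hyS (fun z hz => ?_)
        have h := hy2max z hz
        rw [hGq, hGq] at h ⊢
        exact h.trans (le_of_eq hqq.symm)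
      have hyy : y = y2 := hanti y hyS y2 hy2S hle12 hle21
      rw [hyy] at hr
      exact lt_irrefl _ hr
    · -- A = {i}: after misreporting everyone declares 0
      have hall0 : ∀ j, t2 j = 0 := by
        intro j
        by_cases hj : j = i
        · subst hj; simp [ht2def, hz']
        · rw [ht2def, Function.update_of_ne hj]
          by_contra hne0
          exact hB ⟨j, Finset.mem_erase.mpr ⟨hj, by simp [hAdef, hne0]⟩⟩
      obtain ⟨hy2S, -⟩ := hM0 t2 hall0
      have hAi : A = {i} := by
        rcases (Finset.erase_eq_empty_iff A i).mp (Finset.not_nonempty_iff_eq_empty.mp hB) with h | h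
        · exact absurd (h ▸ hiA) (Finset.notMem_empty i)
        · exact h
      have h1 : A.inf' hAne (F y2) ≤ A.inf' hAne (F y) := hymax y2 hy2S
      rw [hsingF (F y2) hAi, hsingF (F y) hAi] at h1
      exact absurd h1 (not_le.mpr hr)
  · -- misreport to the opposite nonzero preference : filter unchanged
    have hA2 : Finset.univ.filter (fun j : Fin n => t2 j ≠ 0) = A := by
      ext j
      by_cases hj : j = i
      · subst hj; simp [ht2def, hz', hAdef, h0]
      · simp [ht2def, Function.update_of_ne hj, hAdef]
    have hA2ne : (Finset.univ.filter (fun j : Fin n => t2 j ≠ 0)).Nonempty := by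
      rw [hA2]; exact hAne
    obtain ⟨hy2S, hy2max, hy2least⟩ := hM t2 ht2all hA2ne
    set F2 : EuclideanSpace ℝ (Fin d) → Fin n → ℝ :=
      fun z j => g j (t2 j) ‖x j - z‖ / ustar j (t2 j) with hF2def
    have hG : ∀ z : EuclideanSpace ℝ (Fin d),
        (Finset.univ.filter (fun j : Fin n => t2 j ≠ 0)).inf' hA2ne
          (fun j => g j (t2 j) ‖x j - z‖ / ustar j (t2 j)) = A.inf' hAne (F2 z) :=
      fun z => Finset.inf'_congr hA2ne hA2 (fun _ _ => rfl)
    have ht2i : t2 i = t' := by simp [ht2def]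
    have hipos' : (0:ℝ) < ustar i t' := (hstar i t' ht').2
    -- the misreported ratio of agent i moves the opposite way
    have hr' : F2 y2 i < F2 y i := by
      show g i (t2 i) ‖x i - y2‖ / ustar i (t2 i) < g i (t2 i) ‖x i - y‖ / ustar i (t2 i)
      rw [ht2i]
      refine div_lt_div_of_pos_right ?_ hipos'
      rcases ht i with hti | hti | hti
      · -- t i = -1, so t' = 1
        have ht1 : t' = 1 := by
          rcases ht' with h | h | h
          · exact absurd (h.trans hti.symm) hsame
          · exact absurd h hz'
          · exact h
        have hd : ‖x i - y‖ < ‖x i - y2‖ := by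
          have hc : g i (-1) ‖x i - y‖ < g i (-1) ‖x i - y2‖ := by rw [← hti]; exact hcon
          exact ((hgm i).lt_iff_lt (hdist y) (hdist y2)).mp hc
        rw [ht1]
        exact hga i (hdist y) (hdist y2) hd
      · exact absurd hti h0
      · -- t i = 1, so t' = -1
        have ht1 : t' = -1 := by
          rcases ht' with h | h | h
          · exact h
          · exact absurd h hz'
          · exact absurd (h.trans hti.symm) hsame
        have hd : ‖x i - y2‖ < ‖x i - y‖ := by
          have hc : g i 1 ‖x i - y‖ < g i 1 ‖x i - y2‖ := by rw [← hti]; exact hcon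
          exact ((hga i).lt_iff_gt (hdist y) (hdist y2)).mp hc
        rw [ht1]
        exact hgm i (hdist y2) (hdist y) hd
    by_cases hB : (A.erase i).Nonempty
    · have hsplit : ∀ z : EuclideanSpace ℝ (Fin d),
          A.inf' hAne (F z) = min (F z i) ((A.erase i).inf' hB (F z)) :=
        fun z => inf'_split hiA hB (F z) hAne
      have hsplit2 : ∀ z : EuclideanSpace ℝ (Fin d),
          A.inf' hAne (F2 z) = min (F2 z i) ((A.erase i).inf' hB (F z)) := by
        intro z
        rw [inf'_split hiA hB (F2 z) hAne]
        congr 1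
        refine Finset.inf'_congr hB rfl (fun j hj => ?_)
        have hji : j ≠ i := (Finset.mem_erase.mp hj).1
        simp [hF2def, hFdef, ht2def, Function.update_of_ne hji]
      have h1 : A.inf' hAne (F y2) ≤ A.inf' hAne (F y) := hymax y2 hy2S
      have h2 : A.inf' hAne (F2 y) ≤ A.inf' hAne (F2 y2) := by
        have h := hy2max y hyS
        rwa [hG, hG] at h
      rw [hsplit, hsplit] at h1
      rw [hsplit2, hsplit2] at h2
      -- from h1 : qy2 ≤ F y i, min at y2 is qy2, qy2 ≤ qy
      have hq2Fyi : (A.erase i).inf' hB (F y2) ≤ F y i :=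
        (min_le_iff.mp (h1.trans (min_le_left _ _))).resolve_left (not_le.mpr hr)
      have hminy2 : min (F y2 i) ((A.erase i).inf' hB (F y2)) = (A.erase i).inf' hB (F y2) :=
        min_eq_right (le_of_lt (lt_of_le_of_lt hq2Fyi hr))
      have hq21 : (A.erase i).inf' hB (F y2) ≤ (A.erase i).inf' hB (F y) := by
        rw [hminy2] at h1
        exact h1.trans (min_le_right _ _)
      -- from h2 : qy ≤ F2 y2 i, min at y is qy, qy ≤ qy2
      have hqF2 : (A.erase i).inf' hB (F y) ≤ F2 y2 i :=
        (min_le_iff.mp (h2.trans (min_le_left _ _))).resolve_left (not_le.mpr hr')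
      have hminy' : min (F2 y i) ((A.erase i).inf' hB (F y)) = (A.erase i).inf' hB (F y) :=
        min_eq_right (le_of_lt (lt_of_le_of_lt hqF2 hr'))
      have hq12 : (A.erase i).inf' hB (F y) ≤ (A.erase i).inf' hB (F y2) := by
        rw [hminy'] at h2
        exact h2.trans (min_le_right _ _)
      have hqq : (A.erase i).inf' hB (F y) = (A.erase i).inf' hB (F y2) :=
        le_antisymm hq12 hq21
      have hminy : min (F y i) ((A.erase i).inf' hB (F y)) = (A.erase i).inf' hB (F y) :=
        min_eq_right (by rw [hqq]; exact hq2Fyi)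
      have hminy2' : min (F2 y2 i) ((A.erase i).inf' hB (F y2)) = (A.erase i).inf' hB (F y2) :=
        min_eq_right (by rw [← hqq]; exact hqF2)
      have hmeq : A.inf' hAne (F y) = A.inf' hAne (F y2) := by
        rw [hsplit, hsplit, hminy, hminy2, hqq]
      have hmeq2 : A.inf' hAne (F2 y) = A.inf' hAne (F2 y2) := by
        rw [hsplit2, hsplit2, hminy', hminy2', hqq]
      have hle12 : le y y2 := by
        refine hyleast y2 hy2S (fun z hz => ?_)
        exact (hymax z hz).trans (le_of_eq hmeq)
      have hle21 : le y2 y := by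
        refine hy2least y hyS (fun z hz => ?_)
        have h := hy2max z hz
        rw [hG, hG] at h ⊢
        exact h.trans (le_of_eq hmeq2.symm)
      have hyy : y = y2 := hanti y hyS y2 hy2S hle12 hle21
      rw [hyy] at hr
      exact lt_irrefl _ hr
    · -- A = {i}
      have hAi : A = {i} := by
        rcases (Finset.erase_eq_empty_iff A i).mp (Finset.not_nonempty_iff_eq_empty.mp hB) with h | h
        · exact absurd (h ▸ hiA) (Finset.notMem_empty i)
        · exact h
      have h2 : A.inf' hAne (F2 y) ≤ A.inf' hAne (F2 y2) := by
        have h := hy2max y hyS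
        rwa [hG, hG] at h
      rw [hsingF (F2 y) hAi, hsingF (F2 y2) hAi] at h2
      exact absurd h2 (not_le.mpr hr')
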